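/- For nonnegative integers n and i with i <= n: the i-th divided difference of x^n with respect to the interpolation points x_1 = -1, x_2 = -q, ..., x_{i+1} = -q^i equals (-1)^{n-i} [n choose i]_q, i.e., h_{n-i}(-1, -q, ..., -q^i) = (-1)^{n-i} [n choose i]_q. -/
import Mathlib


open Finset

variable {F : Type*} [Field F]

/-- `(q;q)_n = (1-q)(1-q^2)...(1-q^n)` -/
def qfac (q : F) (n : ℕ) : F := ∏ j ∈ Finset.range n, (1 - q ^ (j + 1))

/-- `(z;q)_k = (1-z)(1-zq)...(1-zq^{k-1})` -/
def qpoch (z q : F) (k : ℕ) : F := ∏ j ∈ Finset.range k, (1 - z * q ^ j)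

/-- Gaussian binomial coefficient `[n choose k]_q` -/
def qbinom (q : F) (n k : ℕ) : F := qfac q n / (qfac q k * qfac q (n - k))

/-- Sum over weakly increasing `m`-tuples `lo ≤ i_1 ≤ ... ≤ i_m ≤ n` of
`∏_j q^{i_j}/(1-q^{i_j})` (equal to `1` when `m = 0`). -/
def chainSum (q : F) (lo n m : ℕ) : F :=
  ∑ c ∈ Finset.univ.filter (fun c : Fin m → Fin (n + 1) =>
      (∀ j k : Fin m, j ≤ k → c j ≤ c k) ∧ ∀ j, lo ≤ (c j : ℕ)),
    ∏ j, q ^ (c j : ℕ) / (1 - q ^ (c j : ℕ))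

/-- Complete homogeneous symmetric function `h_m` of the variables
`x lo, x (lo+1), ..., x n`. -/
def hSum {R : Type*} [CommRing R] (x : ℕ → R) (lo n m : ℕ) : R :=
  ∑ c ∈ Finset.univ.filter (fun c : Fin m → Fin (n + 1) =>
      (∀ j k : Fin m, j ≤ k → c j ≤ c k) ∧ ∀ j, lo ≤ (c j : ℕ)),
    ∏ j, x (c j : ℕ)

lemma hSum_zero {R : Type*} [CommRing R] (x : ℕ → R) (lo n : ℕ) : hSum x lo n 0 = 1 := by
  unfold hSum
  rw [Finset.filter_true_of_mem (fun c _ => ⟨fun j => j.elim0, fun j => j.elim0⟩)]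
  simp

lemma hSum_neg {R : Type*} [CommRing R] (x : ℕ → R) (lo n m : ℕ) :
    hSum (fun j => -x j) lo n m = (-1) ^ m * hSum x lo n m := by
  unfold hSum
  rw [Finset.mul_sum]
  refine Finset.sum_congr rfl fun c _ => ?_
  have : ∏ j : Fin m, -x (c j) = ∏ j : Fin m, (-1 : R) * x (c j) :=
    Finset.prod_congr rfl fun j _ => (neg_one_mul _).symm
  rw [this, Finset.prod_mul_distrib, Finset.prod_const]
  simp

lemma hSum_top {R : Type*} [CommRing R] (x : ℕ → R) (n m : ℕ) :
    hSum x (n+1) n (m+1) = 0 := by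
  unfold hSum
  rw [Finset.filter_false_of_mem, Finset.sum_empty]
  rintro c _ ⟨-, hge⟩
  have := (c 0).isLt
  have := hge 0
  omega

lemma hSum_succ {R : Type*} [CommRing R] (x : ℕ → R) (lo n m : ℕ) (hlo : lo ≤ n) :
    hSum x lo n (m+1) = hSum x (lo+1) n (m+1) + x lo * hSum x lo n m := by
  unfold hSum
  rw [← Finset.sum_filter_add_sum_filter_not
    (Finset.univ.filter (fun c : Fin (m+1) → Fin (n+1) =>
      (∀ j k : Fin (m+1), j ≤ k → c j ≤ c k) ∧ ∀ j, lo ≤ (c j : ℕ)))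
    (fun c => lo + 1 ≤ (c 0 : ℕ))]
  congr 1
  · rw [Finset.filter_filter]
    apply Finset.sum_congr _ (fun _ _ => rfl)
    apply Finset.filter_congr
    intro c _
    constructor
    · rintro ⟨⟨hmono, hge⟩, h0⟩
      refine ⟨hmono, fun j => ?_⟩
      have := hmono 0 j (Fin.zero_le j)
      rw [Fin.le_def] at this
      omega
    · rintro ⟨hmono, hge⟩
      exact ⟨⟨hmono, fun j => le_trans (by omega) (hge j)⟩, hge 0⟩
  · rw [Finset.mul_sum]
    refine Finset.sum_nbij' (i := fun c => c ∘ Fin.succ)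
      (j := fun d => Fin.cons ⟨lo, by omega⟩ d) ?_ ?_ ?_ ?_ ?_
    · intro c hc
      simp only [Finset.mem_filter, Finset.mem_univ, true_and] at hc ⊢
      obtain ⟨⟨hmono, hge⟩, -⟩ := hc
      exact ⟨fun j k hjk => hmono j.succ k.succ (by simpa using hjk), fun j => hge j.succ⟩
    · intro d hd
      simp only [Finset.mem_filter, Finset.mem_univ, true_and] at hd ⊢
      obtain ⟨hmono, hge⟩ := hd
      have hge' : ∀ j, lo ≤ ((Fin.cons (⟨lo, by omega⟩ : Fin (n+1)) d : Fin (m+1) → Fin (n+1)) j : ℕ) := by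
        intro j
        refine Fin.cases ?_ (fun j' => ?_) j
        · simp
        · simpa using hge j'
      refine ⟨⟨?_, hge'⟩, ?_⟩
      · intro j k hjk
        rcases Fin.eq_zero_or_eq_succ j with rfl | ⟨j', rfl⟩
        · rw [Fin.le_def]
          simpa using hge' k
        · rcases Fin.eq_zero_or_eq_succ k with rfl | ⟨k', rfl⟩
          · have h0 : (j'.succ : Fin (m+1)) = 0 := le_antisymm hjk (Fin.zero_le _)
            simp [h0]
          · simp only [Fin.cons_succ]
            exact hmono j' k' (by simpa using hjk)
      · simp
    · intro c hc
      simp only [Finset.mem_filter, Finset.mem_univ, true_and] at hc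
      obtain ⟨⟨-, hge⟩, h0⟩ := hc
      have hc0 : c 0 = ⟨lo, by omega⟩ := by
        have := hge 0
        apply Fin.ext
        show (c 0 : ℕ) = lo
        omega
      funext j
      refine Fin.cases ?_ (fun j' => ?_) j
      · simp [hc0]
      · simp
    · intro d hd
      funext j
      simp
    · intro c hc
      simp only [Finset.mem_filter, Finset.mem_univ, true_and] at hc
      obtain ⟨⟨-, hge⟩, h0⟩ := hc
      have hc0 : (c 0 : ℕ) = lo := by have := hge 0; omega
      rw [Fin.prod_univ_succ, hc0]
      rfl

lemma qfac_ne_zero {q : F} {n : ℕ} (hq : ∀ j ∈ Finset.Icc 1 n, q ^ j ≠ 1)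
    {k : ℕ} (hk : k ≤ n) : qfac q k ≠ 0 := by
  unfold qfac
  apply Finset.prod_ne_zero_iff.2
  intro j hj
  rw [Finset.mem_range] at hj
  have : q ^ (j+1) ≠ 1 := hq _ (Finset.mem_Icc.2 ⟨by omega, by omega⟩)
  exact sub_ne_zero.2 (fun h => this h.symm)

lemma qfac_succ (q : F) (k : ℕ) : qfac q (k+1) = qfac q k * (1 - q ^ (k+1)) := by
  rw [qfac, qfac, Finset.prod_range_succ]

lemma qbinom_self {q : F} {n : ℕ} (hq : ∀ j ∈ Finset.Icc 1 n, q ^ j ≠ 1)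
    {d : ℕ} (hd : d ≤ n) : qbinom q d d = 1 := by
  unfold qbinom
  rw [Nat.sub_self]
  have h0 : qfac q 0 = 1 := by simp [qfac]
  rw [h0, mul_one, div_self (qfac_ne_zero hq hd)]

lemma qbinom_zero' {q : F} {n : ℕ} (hq : ∀ j ∈ Finset.Icc 1 n, q ^ j ≠ 1)
    {d : ℕ} (hd : d ≤ n) : qbinom q d 0 = 1 := by
  unfold qbinom
  rw [Nat.sub_zero]
  have h0 : qfac q 0 = 1 := by simp [qfac]
  rw [h0, one_mul, div_self (qfac_ne_zero hq hd)]

lemma qbinom_pascal {q : F} {n : ℕ} (hq : ∀ j ∈ Finset.Icc 1 n, q ^ j ≠ 1)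
    (a b : ℕ) (h : a + b + 2 ≤ n) :
    qbinom q (a+b+2) (b+1) =
      q ^ (a+1) * qbinom q (a+b+1) b + qbinom q (a+b+1) (b+1) := by
  unfold qbinom
  rw [show a+b+2-(b+1) = a+1 from by omega, show a+b+1-b = a+1 from by omega,
    show a+b+1-(b+1) = a from by omega,
    show a+b+2 = (a+b+1)+1 from by omega, qfac_succ,
    show a+1 = a+1 from rfl, qfac_succ q a, qfac_succ q b]
  have hA : qfac q a ≠ 0 := qfac_ne_zero hq (by omega)
  have hB : qfac q b ≠ 0 := qfac_ne_zero hq (by omega)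
  have hC : qfac q (a+b+1) ≠ 0 := qfac_ne_zero hq (by omega)
  have ha1 : (1 - q ^ (a+1)) ≠ 0 := by
    have : q ^ (a+1) ≠ 1 := hq _ (Finset.mem_Icc.2 ⟨by omega, by omega⟩)
    exact sub_ne_zero.2 (fun h => this h.symm)
  have hb1 : (1 - q ^ (b+1)) ≠ 0 := by
    have : q ^ (b+1) ≠ 1 := hq _ (Finset.mem_Icc.2 ⟨by omega, by omega⟩)
    exact sub_ne_zero.2 (fun h => this h.symm)
  field_simp
  ring

lemma main_lemma (q : F) (n i : ℕ) (hin : i ≤ n)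
    (hq : ∀ j ∈ Finset.Icc 1 n, q ^ j ≠ 1) :
    ∀ m d : ℕ, d ≤ i → m + d ≤ n →
      hSum (fun j => q ^ j) (i - d) i m = q ^ ((i - d) * m) * qbinom q (m + d) d := by
  intro m
  induction m with
  | zero =>
    intro d hd hnd
    rw [hSum_zero, Nat.mul_zero, pow_zero, one_mul, Nat.zero_add,
      qbinom_self hq (by omega)]
  | succ m ih =>
    intro d
    induction d with
    | zero =>
      intro _ h
      have h0 := ih 0 (by omega) (by omega)
      rw [Nat.sub_zero, Nat.add_zero] at h0
      rw [Nat.sub_zero, hSum_succ _ i i m le_rfl, hSum_top, h0, Nat.add_zero,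
        qbinom_zero' hq (by omega), qbinom_zero' hq (by omega)]
      rw [mul_one, mul_one, zero_add, ← pow_add]
      ring_nf
    | succ d ihd =>
      intro hd hnd
      rw [hSum_succ _ (i - (d+1)) i m (by omega),
        show i - (d+1) + 1 = i - d from by omega,
        ihd (by omega) (by omega), ih (d+1) (by omega) (by omega),
        show m + 1 + (d + 1) = m + d + 2 from by omega,
        show m + 1 + d = m + d + 1 from by omega,
        show m + (d + 1) = m + d + 1 from by omega,
        qbinom_pascal hq m d (by omega)]
      set lo := i - (d+1) with hlo
      rw [show i - d = lo + 1 from by omega]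
      ring

theorem divided_difference_power (q : F) (n i : ℕ) (hin : i ≤ n)
    (hq : ∀ j ∈ Finset.Icc 1 n, q ^ j ≠ 1) :
    hSum (fun j => -q ^ j) 0 i (n - i) = (-1) ^ (n - i) * qbinom q n i := by
  have hneg := hSum_neg (fun j => q ^ j) 0 i (n - i)
  have hmain := main_lemma q n i hin hq (n - i) i le_rfl (by omega)
  rw [Nat.sub_self, Nat.zero_mul, pow_zero, one_mul,
    show n - i + i = n from by omega] at hmain
  rw [show (fun j => -q ^ j) = (fun j => -(q ^ j)) from rfl, hneg, hmain]
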